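/- In a connected graph, if two vertices u and v are connected but not biconnected, then the first cutvertex encountered on any path from u to v is the same; that is, the nearest cutvertex separating u from v is uniquely defined. -/

import Mathlib

/-- `w` is a cutvertex separating `u` from `v`: `w ∉ {u, v}` and every `u`–`v` walk in `G`
passes through `w`. -/
def SepCut {V : Type*} (G : SimpleGraph V) (u v w : V) : Prop :=
  w ≠ u ∧ w ≠ v ∧ ∀ p : G.Walk u v, w ∈ p.support

/-- `w` is the first cutvertex separating `u` from `v` encountered along the walk `p`
(i.e. the separating cutvertex occurring earliest in the vertex sequence of `p`). -/
def FirstCutOn {V : Type*} [DecidableEq V] (G : SimpleGraph V) (u v : V)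
    (p : G.Walk u v) (w : V) : Prop :=
  SepCut G u v w ∧ ∀ w', SepCut G u v w' → p.support.idxOf w ≤ p.support.idxOf w'

private lemma indexOf_getLast {V : Type*} [DecidableEq V] {l : List V} (hn : l.Nodup)
    {a : V} (hne : l ≠ []) (ha : l.getLast hne = a) : l.idxOf a = l.length - 1 := by
  obtain ⟨l', hl⟩ : ∃ l', l = l' ++ [a] := by
    refine ⟨l.dropLast, ?_⟩
    conv_lhs => rw [← List.dropLast_append_getLast hne]
    rw [ha]
  subst hl
  rw [List.nodup_append] at hn
  have hnotmem : a ∉ l' := fun hmem => hn.2.2 a hmem a (by simp) rfl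
  rw [List.idxOf_append_of_notMem hnotmem]
  simp

/-- On a path, the index of a vertex in the support equals the length of `takeUntil`. -/
private lemma indexOf_eq_length_takeUntil {V : Type*} [DecidableEq V] {G : SimpleGraph V}
    {u v w : V} (p : G.Walk u v) (hp : p.IsPath) (h : w ∈ p.support) :
    p.support.idxOf w = (p.takeUntil w h).length := by
  have hspec := p.take_spec h
  have hmem : w ∈ (p.takeUntil w h).support := SimpleGraph.Walk.end_mem_support _
  conv_lhs => rw [← hspec]
  rw [SimpleGraph.Walk.support_append, List.idxOf_append_of_mem hmem]
  have hnd : (p.takeUntil w h).support.Nodup := (hp.takeUntil h).support_nodup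
  have hlast : (p.takeUntil w h).support.getLast (SimpleGraph.Walk.support_ne_nil _) = w :=
    SimpleGraph.Walk.getLast_support _
  rw [indexOf_getLast hnd (SimpleGraph.Walk.support_ne_nil (p.takeUntil w h)) hlast,
    SimpleGraph.Walk.length_support]
  simp

/-- If `u` and `v` are connected but not biconnected (there is a cutvertex separating
them), then the first separating cutvertex encountered on any path from `u` to `v` is the
same: the nearest cutvertex separating `u` from `v` is uniquely defined. -/
theorem stmt0 {V : Type*} [DecidableEq V] (G : SimpleGraph V) (u v : V)
    (hconn : G.Reachable u v) (hsep : ∃ w, SepCut G u v w)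
    (p q : G.Walk u v) (hp : p.IsPath) (hq : q.IsPath)
    (w₁ w₂ : V) (h₁ : FirstCutOn G u v p w₁) (h₂ : FirstCutOn G u v q w₂) :
    w₁ = w₂ := by
  by_contra hne
  have hw1p : w₁ ∈ p.support := h₁.1.2.2 p
  have hw1q : w₁ ∈ q.support := h₁.1.2.2 q
  have hw2p : w₂ ∈ p.support := h₂.1.2.2 p
  have hw2q : w₂ ∈ q.support := h₂.1.2.2 q
  -- strict inequalities of indices
  have hlt_p : p.support.idxOf w₁ < p.support.idxOf w₂ := by
    have hle := h₁.2 w₂ h₂.1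
    rcases lt_or_eq_of_le hle with h | h
    · exact h
    · exact absurd ((List.idxOf_inj hw1p).mp h) hne
  have hlt_q : q.support.idxOf w₂ < q.support.idxOf w₁ := by
    have hle := h₂.2 w₁ h₁.1
    rcases lt_or_eq_of_le hle with h | h
    · exact h
    · exact absurd ((List.idxOf_inj hw2q).mp h).symm hne
  -- construct the walk avoiding w₂
  set r : G.Walk u v := (p.takeUntil w₁ hw1p).append (q.dropUntil w₁ hw1q) with hr
  have hw2r : w₂ ∈ r.support := h₂.1.2.2 r
  rw [hr, SimpleGraph.Walk.mem_support_append_iff] at hw2r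
  rcases hw2r with hmem | hmem
  · -- w₂ in the prefix of p before w₁ : contradicts hlt_p
    have h1 : p.support.idxOf w₁ = (p.takeUntil w₁ hw1p).length :=
      indexOf_eq_length_takeUntil p hp hw1p
    have h2 : p.support.idxOf w₂ ≤ (p.takeUntil w₁ hw1p).length := by
      conv_lhs => rw [← p.take_spec hw1p]
      rw [SimpleGraph.Walk.support_append, List.idxOf_append_of_mem hmem]
      have := List.idxOf_lt_length_iff.mpr hmem
      rw [SimpleGraph.Walk.length_support] at this
      omega
    omega
  · -- w₂ in the suffix of q after w₁ : contradicts hlt_q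
    have hcons := (q.dropUntil w₁ hw1q).support_eq_cons
    have htail : w₂ ∈ (q.dropUntil w₁ hw1q).support.tail := by
      rw [hcons] at hmem
      rcases List.mem_cons.mp hmem with h | h
      · exact absurd h.symm hne
      · exact h
    have hnd : (q.support).Nodup := hq.support_nodup
    rw [← q.take_spec hw1q, SimpleGraph.Walk.support_append] at hnd
    have hdisj := (List.nodup_append.mp hnd).2.2
    have hnotmem : w₂ ∉ (q.takeUntil w₁ hw1q).support := fun hc => hdisj w₂ hc w₂ htail rfl
    have h1 : q.support.idxOf w₁ = (q.takeUntil w₁ hw1q).length :=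
      indexOf_eq_length_takeUntil q hq hw1q
    have h2 : (q.takeUntil w₁ hw1q).length < q.support.idxOf w₂ := by
      conv_rhs => rw [← q.take_spec hw1q]
      rw [SimpleGraph.Walk.support_append, List.idxOf_append_of_notMem hnotmem]
      rw [SimpleGraph.Walk.length_support]
      omega
    omega
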